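/- Let σ ∈ (0,1). There is a constant C ≥ 1 (depending on σ, the Li–Yau constants and the volume comparability constants) such that for all t > 0 and all x, y, z ∈ M with d(y,z) ≤ t: C^{−1} ≤ Q_t^σ(x,y) / Q_t^σ(x,z) ≤ C. -/

import Mathlib

open MeasureTheory Metric Real Filter
open Set

/-- The kernel subordinated to the heat kernel `h`, arising from the
Caffarelli–Silvestre extension problem:
`Q_t^σ(x,y) = (t^{2σ}/(2^{2σ}Γ(σ))) ∫₀^∞ h_u(x,y) e^{-t²/(4u)} u^{-1-σ} du`. -/
noncomputable def Qker {M : Type*} (h : ℝ → M → M → ℝ) (σ t : ℝ) (x y : M) : ℝ :=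
  (t ^ (2*σ) / ((2:ℝ) ^ (2*σ) * Real.Gamma σ)) *
    ∫ u in Set.Ioi (0:ℝ), h u x y * Real.exp (-(t^2)/(4*u)) * u ^ (-1-σ)

lemma aesm_phi (b s : ℝ) {S : Set ℝ} (hS : S ⊆ Ioi 0) (hSm : MeasurableSet S) :
    AEStronglyMeasurable (fun u : ℝ => Real.exp (-b/u) * u ^ (-1-s))
      (volume.restrict S) := by
  have h1 : Measurable fun u : ℝ => Real.exp (-b/u) :=
    (measurable_const.div measurable_id).exp
  have h2 : ContinuousOn (fun u : ℝ => u ^ (-1-s)) S := by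
    intro u hu
    exact (Real.continuousAt_rpow_const u _ (Or.inl (ne_of_gt (hS hu)))).continuousWithinAt
  exact h1.aestronglyMeasurable.mul (h2.aestronglyMeasurable hSm)

lemma phi_integrable {b s : ℝ} (hb : 0 < b) (hs : 0 < s) :
    IntegrableOn (fun u : ℝ => Real.exp (-b/u) * u ^ (-1-s)) (Ioi (0:ℝ)) := by
  have h1 : IntegrableOn (fun u : ℝ => Real.exp (-b/u) * u ^ (-1-s)) (Ioc (0:ℝ) 1) := by
    set n : ℕ := ⌈s⌉₊ + 2 with hn
    have hns : (s:ℝ) + 2 ≤ (n:ℝ) := by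
      have := Nat.le_ceil s
      push_cast [hn]; linarith
    refine Integrable.mono' (g := fun _ : ℝ => ((n.factorial : ℝ) / b ^ n : ℝ))
      (integrableOn_const (by simp) (by simp))
      ((aesm_phi b s Ioc_subset_Ioi_self measurableSet_Ioc)) ?_
    filter_upwards [ae_restrict_mem measurableSet_Ioc] with u hu
    obtain ⟨hu0, hu1⟩ := hu
    have hbu : 0 < b / u := div_pos hb hu0
    have hfact : (b/u)^n / (n.factorial : ℝ) ≤ Real.exp (b/u) :=
      Real.pow_div_factorial_le_exp _ hbu.le n
    have hexp : Real.exp (-b/u) ≤ (n.factorial : ℝ) * (u^n / b^n) := by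
      rw [neg_div, Real.exp_neg]
      have hpos : (0:ℝ) < (b/u)^n / (n.factorial : ℝ) := by positivity
      calc (Real.exp (b/u))⁻¹ ≤ ((b/u)^n / (n.factorial : ℝ))⁻¹ := by
            apply inv_anti₀ hpos hfact
        _ = (n.factorial : ℝ) * (u^n / b^n) := by
            rw [div_pow]
            field_simp
    have hrpow : (0:ℝ) < u ^ (-1-s) := Real.rpow_pos_of_pos hu0 _
    have hpow : u^n * u ^ (-1-s) ≤ 1 := by
      have : (u:ℝ)^n * u ^ (-1-s) = u ^ ((n:ℝ) + (-1-s)) := by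
        rw [Real.rpow_add hu0, Real.rpow_natCast]
      rw [this]
      exact Real.rpow_le_one hu0.le hu1 (by linarith)
    have h0 : 0 ≤ Real.exp (-b/u) * u ^ (-1-s) := by positivity
    rw [Real.norm_eq_abs, abs_of_nonneg h0]
    calc Real.exp (-b/u) * u ^ (-1-s) ≤ ((n.factorial : ℝ) * (u^n / b^n)) * u ^ (-1-s) :=
          mul_le_mul_of_nonneg_right hexp hrpow.le
      _ = ((n.factorial : ℝ) / b^n) * (u^n * u ^ (-1-s)) := by ring
      _ ≤ ((n.factorial : ℝ) / b^n) * 1 :=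
          mul_le_mul_of_nonneg_left hpow (by positivity)
      _ = (n.factorial : ℝ) / b^n := mul_one _
  have h2 : IntegrableOn (fun u : ℝ => Real.exp (-b/u) * u ^ (-1-s)) (Ioi (1:ℝ)) := by
    refine Integrable.mono' (integrableOn_Ioi_rpow_of_lt (by linarith : -1-s < -1) one_pos)
      ((aesm_phi b s (fun u hu => mem_Ioi.2 (lt_trans one_pos (mem_Ioi.1 hu))) measurableSet_Ioi)) ?_
    filter_upwards [ae_restrict_mem measurableSet_Ioi] with u hu
    have hu0 : (0:ℝ) < u := lt_trans one_pos hu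
    have h0 : 0 ≤ Real.exp (-b/u) * u ^ (-1-s) := by positivity
    rw [Real.norm_eq_abs, abs_of_nonneg h0]
    calc Real.exp (-b/u) * u ^ (-1-s) ≤ 1 * u ^ (-1-s) := by
          apply mul_le_mul_of_nonneg_right _ (Real.rpow_pos_of_pos hu0 _).le
          rw [Real.exp_le_one_iff]
          rw [neg_div]
          simp only [Left.neg_nonpos_iff]
          positivity
      _ = u ^ (-1-s) := one_mul _
  have := h1.union h2
  rwa [Ioc_union_Ioi_eq_Ioi (zero_le_one : (0:ℝ) ≤ 1)] at this

lemma phi_scale {b s : ℝ} (hb : 0 < b) :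
    ∫ u in Ioi (0:ℝ), Real.exp (-b/u) * u ^ (-1-s)
      = b ^ (-s) * ∫ v in Ioi (0:ℝ), Real.exp (-1/v) * v ^ (-1-s) := by
  have key := integral_comp_mul_left_Ioi (fun u : ℝ => Real.exp (-b/u) * u ^ (-1-s)) 0 hb
  rw [mul_zero] at key
  have congr1 : ∫ v in Ioi (0:ℝ), Real.exp (-b/(b*v)) * (b*v) ^ (-1-s)
      = ∫ v in Ioi (0:ℝ), b ^ (-1-s) * (Real.exp (-1/v) * v ^ (-1-s)) := by
    refine setIntegral_congr_fun measurableSet_Ioi (fun v hv => ?_)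
    have hv0 : (0:ℝ) < v := hv
    rw [Real.mul_rpow hb.le hv0.le]
    rw [show -b/(b*v) = -1/v by field_simp]
    ring
  rw [congr1] at key
  rw [integral_const_mul] at key
  have : (∫ u in Ioi (0:ℝ), Real.exp (-b/u) * u ^ (-1-s))
      = b * (b ^ (-1-s) * ∫ v in Ioi (0:ℝ), Real.exp (-1/v) * v ^ (-1-s)) := by
    rw [smul_eq_mul] at key
    rw [key, ← mul_assoc, mul_inv_cancel₀ hb.ne', one_mul]
  rw [this, ← mul_assoc]
  congr 1
  rw [show b * b ^ (-1-s) = b ^ (1:ℝ) * b ^ (-1-s) by rw [Real.rpow_one],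
    ← Real.rpow_add hb]
  congr 1
  ring

set_option maxHeartbeats 1000000 in
lemma main_est {M : Type*} [MetricSpace M] [MeasurableSpace M] [BorelSpace M]
    (μ : Measure M)
    (hVpos : ∀ (x : M) (r : ℝ), 0 < r → 0 < μ (ball x r))
    (hVfin : ∀ (x : M) (r : ℝ), 0 < r → μ (ball x r) < ⊤)
    (ν c₀ C₀ : ℝ) (hν : 0 < ν) (hc₀ : 0 < c₀) (hC₀ : 0 < C₀)
    (hub : ∀ (w : M) (r R : ℝ), 0 < r → r ≤ R →
        (μ (ball w R)).toReal ≤ C₀ * (R/r) ^ ν * (μ (ball w r)).toReal)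
    (hlb : ∀ (w : M) (r R : ℝ), 0 < r → r ≤ R →
        c₀ * (μ (ball w r)).toReal ≤ (μ (ball w R)).toReal)
    (h : ℝ → M → M → ℝ)
    (c₁ C₁ c₂ C₂ : ℝ) (hc₁ : 0 < c₁) (hC₁ : 0 < C₁) (hc₂ : 0 < c₂) (hC₂ : 0 < C₂)
    (σ : ℝ) (hσ0 : 0 < σ)
    (t : ℝ) (ht : 0 < t) (x y : M)
    (hmeas1 : Measurable fun u : ℝ => h u x y)
    (hLY1 : ∀ u : ℝ, 0 < u →
        c₁ / (μ (ball y (Real.sqrt u))).toReal * Real.exp (-C₁ * (dist x y)^2 / u) ≤ h u x y ∧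
        h u x y ≤ C₂ / (μ (ball y (Real.sqrt u))).toReal * Real.exp (-c₂ * (dist x y)^2 / u)) :
    IntegrableOn (fun u => h u x y * Real.exp (-(t^2)/(4*u)) * u ^ (-1-σ)) (Ioi (0:ℝ)) ∧
    (c₁ * Real.exp (-C₁ - 4⁻¹) * (3 * (4:ℝ) ^ (-1-σ)) / (C₀ * 2 ^ ν)) *
        ((t + dist x y) ^ (-(2*σ)) / (μ (ball y (t + dist x y))).toReal)
      ≤ (∫ u in Ioi (0:ℝ), h u x y * Real.exp (-(t^2)/(4*u)) * u ^ (-1-σ)) ∧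
    (∫ u in Ioi (0:ℝ), h u x y * Real.exp (-(t^2)/(4*u)) * u ^ (-1-σ))
      ≤ (C₂ * max C₀ c₀⁻¹ *
          ((min c₂ 4⁻¹ / 2) ^ (-σ) * (∫ v in Ioi (0:ℝ), Real.exp (-1/v) * v ^ (-1-σ)) +
           (min c₂ 4⁻¹ / 2) ^ (-(σ+ν/2)) *
             (∫ v in Ioi (0:ℝ), Real.exp (-1/v) * v ^ (-1-(σ+ν/2))))) *
        ((t + dist x y) ^ (-(2*σ)) / (μ (ball y (t + dist x y))).toReal) := by
  set D := dist x y with hD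
  set r := t + D with hrdef
  have hD0 : 0 ≤ D := dist_nonneg
  have hr : 0 < r := by positivity
  have htr : t ≤ r := by simp [hrdef, hD0]
  have hDr : D ≤ r := by simp [hrdef]; linarith
  set V := (μ (ball y r)).toReal with hVdef
  have hV : 0 < V := ENNReal.toReal_pos (hVpos y r hr).ne' (hVfin y r hr).ne
  set a : ℝ := min c₂ 4⁻¹ / 2 with hadef
  have ha : 0 < a := by
    have := lt_min hc₂ (by norm_num : (0:ℝ) < 4⁻¹)
    positivity
  set Kc : ℝ := max C₀ c₀⁻¹ with hKcdef
  have hKc : 0 < Kc := lt_of_lt_of_le hC₀ (le_max_left _ _)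
  set b : ℝ := a * r^2 with hbdef
  have hb : 0 < b := by positivity
  set f : ℝ → ℝ := fun u => h u x y * Real.exp (-(t^2)/(4*u)) * u ^ (-1-σ) with hfdef
  set s₂ : ℝ := σ + ν/2 with hs2def
  have hs₂ : 0 < s₂ := by positivity
  set g : ℝ → ℝ := fun u => (C₂ * Kc * V⁻¹) *
      (Real.exp (-b/u) * u ^ (-1-σ) + r ^ ν * (Real.exp (-b/u) * u ^ (-1-s₂))) with hgdef
  -- nonnegativity of f on Ioi 0
  have hVusq : ∀ u : ℝ, 0 < u → 0 < (μ (ball y (Real.sqrt u))).toReal := fun u hu =>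
    ENNReal.toReal_pos (hVpos y _ (Real.sqrt_pos.2 hu)).ne' (hVfin y _ (Real.sqrt_pos.2 hu)).ne
  have hf0 : ∀ u ∈ Ioi (0:ℝ), 0 ≤ f u := by
    intro u hu
    have hu0 : (0:ℝ) < u := hu
    have hh0 : 0 ≤ h u x y :=
      le_trans (by positivity) (hLY1 u hu0).1
    simp only [hfdef]
    positivity
  -- pointwise upper bound
  have hfg : ∀ u ∈ Ioi (0:ℝ), f u ≤ g u := by
    intro u hu
    have hu0 : (0:ℝ) < u := hu
    set Vu := (μ (ball y (Real.sqrt u))).toReal with hVudef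
    have hVu : 0 < Vu := hVusq u hu0
    -- combine exponentials
    have har : a * r^2 ≤ c₂ * D^2 + t^2/4 := by
      have h1 : a ≤ c₂/2 := by
        rw [hadef]; gcongr; exact min_le_left _ _
      have h2 : a ≤ 1/8 := by
        rw [hadef]
        have := min_le_right c₂ (4:ℝ)⁻¹
        nlinarith
      nlinarith [sq_nonneg (t - D), sq_nonneg t, sq_nonneg D, mul_pos ht ht]
    have hexp : Real.exp (-c₂ * D^2 / u) * Real.exp (-(t^2)/(4*u))
        ≤ Real.exp (-b/u) := by
      rw [← Real.exp_add, Real.exp_le_exp]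
      rw [show -c₂ * D^2 / u + -(t^2)/(4*u) = (-(c₂ * D^2 + t^2/4))/u by field_simp; ring]
      rw [div_le_div_iff_of_pos_right hu0]
      rw [hbdef]
      linarith
    -- volume bound
    have hVinv : Vu⁻¹ ≤ Kc * (1 + r ^ ν * u ^ (-(ν/2))) * V⁻¹ := by
      rcases le_or_gt u (r^2) with hcase | hcase
      · have hsq : Real.sqrt u ≤ r := by
          calc Real.sqrt u ≤ Real.sqrt (r^2) := Real.sqrt_le_sqrt hcase
            _ = r := Real.sqrt_sq hr.le
        have hsp : 0 < Real.sqrt u := Real.sqrt_pos.2 hu0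
        have h1 := hub y (Real.sqrt u) r hsp hsq
        have hc : (0:ℝ) < C₀ * (r / Real.sqrt u) ^ ν := by positivity
        have h2 : V / (C₀ * (r / Real.sqrt u) ^ ν) ≤ Vu := by
          rw [div_le_iff₀ hc]
          calc V ≤ C₀ * (r / Real.sqrt u) ^ ν * Vu := h1
            _ = Vu * (C₀ * (r / Real.sqrt u) ^ ν) := by ring
        have h3 : Vu⁻¹ ≤ (V / (C₀ * (r / Real.sqrt u) ^ ν))⁻¹ :=
          inv_anti₀ (by positivity) h2
        rw [inv_div] at h3
        have h4 : (r / Real.sqrt u) ^ ν = r ^ ν * u ^ (-(ν/2)) := by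
          rw [Real.div_rpow hr.le (Real.sqrt_nonneg u), Real.sqrt_eq_rpow,
            ← Real.rpow_mul hu0.le, div_eq_mul_inv, ← Real.rpow_neg hu0.le]
          congr 1
          ring
        rw [h4] at h3
        calc Vu⁻¹ ≤ C₀ * (r ^ ν * u ^ (-(ν/2))) / V := h3
          _ = C₀ * (r ^ ν * u ^ (-(ν/2))) * V⁻¹ := by rw [div_eq_mul_inv]
          _ ≤ Kc * (1 + r ^ ν * u ^ (-(ν/2))) * V⁻¹ := by
              gcongr
              · exact le_max_left _ _
              · nlinarith [Real.rpow_nonneg hr.le ν, Real.rpow_nonneg hu0.le (-(ν/2)),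
                  mul_nonneg (Real.rpow_nonneg hr.le ν) (Real.rpow_nonneg hu0.le (-(ν/2)))]
      · have hsq : r ≤ Real.sqrt u := by
          rw [show u = Real.sqrt u ^ 2 from (Real.sq_sqrt hu0.le).symm] at hcase
          exact le_of_lt (by nlinarith [Real.sqrt_nonneg u])
        have h1 := hlb y r (Real.sqrt u) hr hsq
        have h3 : Vu⁻¹ ≤ (c₀ * V)⁻¹ := inv_anti₀ (by positivity) h1
        rw [mul_inv] at h3
        calc Vu⁻¹ ≤ c₀⁻¹ * V⁻¹ := h3
          _ ≤ Kc * (1 + r ^ ν * u ^ (-(ν/2))) * V⁻¹ := by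
              gcongr
              calc c₀⁻¹ = c₀⁻¹ * 1 := (mul_one _).symm
                _ ≤ Kc * (1 + r ^ ν * u ^ (-(ν/2))) := by
                    apply mul_le_mul (le_max_right _ _) _ zero_le_one hKc.le
                    nlinarith [mul_nonneg (Real.rpow_nonneg hr.le ν)
                      (Real.rpow_nonneg hu0.le (-(ν/2)))]
      -- end cases
    have hhle := (hLY1 u hu0).2
    have hE : (0:ℝ) < Real.exp (-(t^2)/(4*u)) := Real.exp_pos _
    have hrp : (0:ℝ) < u ^ (-1-σ) := Real.rpow_pos_of_pos hu0 _
    have step1 : h u x y * Real.exp (-(t^2)/(4*u)) ≤ C₂ / Vu * Real.exp (-b/u) := by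
      calc h u x y * Real.exp (-(t^2)/(4*u))
          ≤ (C₂ / Vu * Real.exp (-c₂ * D^2 / u)) * Real.exp (-(t^2)/(4*u)) :=
            mul_le_mul_of_nonneg_right hhle hE.le
        _ = C₂ / Vu * (Real.exp (-c₂ * D^2 / u) * Real.exp (-(t^2)/(4*u))) := by ring
        _ ≤ C₂ / Vu * Real.exp (-b/u) := by
            apply mul_le_mul_of_nonneg_left hexp (by positivity)
    have step2 : f u ≤ C₂ * Vu⁻¹ * Real.exp (-b/u) * u ^ (-1-σ) := by
      simp only [hfdef]
      calc h u x y * Real.exp (-(t^2)/(4*u)) * u ^ (-1-σ)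
          ≤ (C₂ / Vu * Real.exp (-b/u)) * u ^ (-1-σ) :=
            mul_le_mul_of_nonneg_right step1 hrp.le
        _ = C₂ * Vu⁻¹ * Real.exp (-b/u) * u ^ (-1-σ) := by
            rw [div_eq_mul_inv]
    have hX : u ^ (-(ν/2)) * u ^ (-1-σ) = u ^ (-1-s₂) := by
      rw [← Real.rpow_add hu0, hs2def]
      congr 1
      ring
    calc f u ≤ C₂ * Vu⁻¹ * Real.exp (-b/u) * u ^ (-1-σ) := step2
      _ ≤ C₂ * (Kc * (1 + r ^ ν * u ^ (-(ν/2))) * V⁻¹) * Real.exp (-b/u) * u ^ (-1-σ) := by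
          apply mul_le_mul_of_nonneg_right _ hrp.le
          apply mul_le_mul_of_nonneg_right _ (Real.exp_pos _).le
          exact mul_le_mul_of_nonneg_left hVinv hC₂.le
      _ = g u := by
          simp only [hgdef]
          rw [← hX]
          ring
  -- measurability of f on restrict
  have hfm : AEStronglyMeasurable f (volume.restrict (Ioi (0:ℝ))) := by
    have h1 : Measurable fun u : ℝ => h u x y * Real.exp (-(t^2)/(4*u)) :=
      hmeas1.mul ((measurable_const.div (measurable_const.mul measurable_id)).exp)
    have h2 : ContinuousOn (fun u : ℝ => u ^ (-1-σ)) (Ioi (0:ℝ)) := fun u hu =>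
      (Real.continuousAt_rpow_const u _ (Or.inl (ne_of_gt hu))).continuousWithinAt
    exact h1.aestronglyMeasurable.mul (h2.aestronglyMeasurable measurableSet_Ioi)
  -- integrability of g and f
  have hgint : IntegrableOn g (Ioi (0:ℝ)) := by
    apply Integrable.const_mul
    exact (phi_integrable hb hσ0).add ((phi_integrable hb hs₂).const_mul _)
  have hfint : IntegrableOn f (Ioi (0:ℝ)) := by
    refine Integrable.mono' hgint hfm ?_
    filter_upwards [ae_restrict_mem measurableSet_Ioi] with u hu
    rw [Real.norm_eq_abs, abs_of_nonneg (hf0 u hu)]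
    exact hfg u hu
  refine ⟨hfint, ?_, ?_⟩
  · -- lower bound
    have hsub : Icc (r^2) (4*r^2) ⊆ Ioi (0:ℝ) := fun u hu =>
      lt_of_lt_of_le (by positivity) hu.1
    set m : ℝ := c₁ / (C₀ * 2 ^ ν * V) * Real.exp (-C₁ - 4⁻¹) * (4*r^2) ^ (-1-σ) with hmdef
    have hV2r : (μ (ball y (2*r))).toReal ≤ C₀ * 2 ^ ν * V := by
      have := hub y r (2*r) hr (by linarith)
      rwa [show (2*r)/r = 2 by field_simp] at this
    have hlow : ∀ u ∈ Icc (r^2) (4*r^2), m ≤ f u := by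
      intro u hu
      obtain ⟨hu1, hu2⟩ := hu
      have hu0 : (0:ℝ) < u := lt_of_lt_of_le (by positivity) hu1
      set Vu := (μ (ball y (Real.sqrt u))).toReal with hVudef
      have hVu : 0 < Vu := hVusq u hu0
      have hVu2r : Vu ≤ C₀ * 2 ^ ν * V := by
        refine le_trans ?_ hV2r
        have hsq : Real.sqrt u ≤ 2*r := by
          calc Real.sqrt u ≤ Real.sqrt (4*r^2) := Real.sqrt_le_sqrt hu2
            _ = 2*r := by
                rw [show 4*r^2 = (2*r)^2 by ring]
                exact Real.sqrt_sq (by positivity)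
        exact ENNReal.toReal_mono (hVfin y (2*r) (by positivity)).ne
          (measure_mono (ball_subset_ball hsq))
      have hD2 : D^2 ≤ u := by nlinarith
      have ht2 : t^2 ≤ u := by nlinarith
      have hexp1 : Real.exp (-C₁) ≤ Real.exp (-C₁ * D^2 / u) := by
        rw [Real.exp_le_exp]
        rw [show -C₁ * D^2 / u = -(C₁ * D^2 / u) by ring, neg_le_neg_iff]
        rw [div_le_iff₀ hu0]
        nlinarith
      have hexp2 : Real.exp (-(4:ℝ)⁻¹) ≤ Real.exp (-(t^2)/(4*u)) := by
        rw [Real.exp_le_exp]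
        rw [show -(t^2)/(4*u) = -(t^2/(4*u)) by ring, neg_le_neg_iff]
        rw [div_le_iff₀ (by positivity : (0:ℝ) < 4*u)]
        nlinarith
      have hrw : (4*r^2) ^ (-1-σ) ≤ u ^ (-1-σ) :=
        Real.rpow_le_rpow_of_nonpos hu0 hu2 (by linarith)
      have hA : c₁ / (C₀ * 2 ^ ν * V) * Real.exp (-C₁)
          ≤ h u x y := by
        refine le_trans ?_ (hLY1 u hu0).1
        apply mul_le_mul ?_ hexp1 (Real.exp_pos _).le (by positivity)
        exact div_le_div_of_nonneg_left hc₁.le hVu hVu2r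
      have hh0 : 0 ≤ h u x y := le_trans (by positivity) (hLY1 u hu0).1
      calc m = (c₁ / (C₀ * 2 ^ ν * V) * Real.exp (-C₁)) * Real.exp (-(4:ℝ)⁻¹) *
            (4*r^2) ^ (-1-σ) := by
            rw [hmdef, show (-C₁ - 4⁻¹ : ℝ) = -C₁ + -4⁻¹ by ring, Real.exp_add]
            ring
        _ ≤ h u x y * Real.exp (-(t^2)/(4*u)) * u ^ (-1-σ) := by
            apply mul_le_mul _ hrw (by positivity)
              (by positivity)
            apply mul_le_mul hA hexp2 (Real.exp_pos _).le hh0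
        _ = f u := rfl
    have hIcc : (volume (Icc (r^2) (4*r^2))).toReal = 3*r^2 := by
      rw [Real.volume_Icc, ENNReal.toReal_ofReal (by nlinarith)]
      ring
    have h1 : m * (3*r^2) ≤ ∫ u in Icc (r^2) (4*r^2), f u := by
      rw [← hIcc]
      have := setIntegral_ge_of_const_le measurableSet_Icc
        (by simp [Real.volume_Icc]) hlow (hfint.mono_set hsub)
      rw [smul_eq_mul, mul_comm, measureReal_def] at this
      exact this
    have h2 : (∫ u in Icc (r^2) (4*r^2), f u) ≤ ∫ u in Ioi (0:ℝ), f u := by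
      apply setIntegral_mono_set hfint
      · exact (ae_restrict_iff' measurableSet_Ioi).2 (ae_of_all _ hf0)
      · exact HasSubset.Subset.eventuallyLE hsub
    refine le_trans (le_of_eq ?_) (le_trans h1 h2)
    rw [hmdef]
    have hs4 : ((4:ℝ)*r^2) ^ (-1-σ) = (4:ℝ) ^ (-1-σ) * ((r^2:ℝ)) ^ (-1-σ) :=
      Real.mul_rpow (by norm_num) (by positivity)
    have hr4 : ((r^2:ℝ)) ^ (-1-σ) * r^2 = r ^ (-(2*σ)) := by
      rw [← Real.rpow_natCast r 2, ← Real.rpow_mul hr.le, ← Real.rpow_add hr]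
      congr 1
      push_cast
      ring
    rw [hs4]
    have hVne : V ≠ 0 := hV.ne'
    have hC2ν : (C₀ : ℝ) * 2 ^ ν ≠ 0 := by positivity
    clear_value V r
    set E0 := Real.exp (-C₁ - 4⁻¹) with hE0
    clear_value E0
    rw [← hr4]
    ring
  · -- upper bound
    have h1 : (∫ u in Ioi (0:ℝ), f u) ≤ ∫ u in Ioi (0:ℝ), g u :=
      setIntegral_mono_on hfint hgint measurableSet_Ioi hfg
    have h2 : (∫ u in Ioi (0:ℝ), g u)
        = (C₂ * Kc * V⁻¹) *
          ((∫ u in Ioi (0:ℝ), Real.exp (-b/u) * u ^ (-1-σ)) +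
           r ^ ν * ∫ u in Ioi (0:ℝ), Real.exp (-b/u) * u ^ (-1-s₂)) := by
      simp only [hgdef]
      rw [integral_const_mul, integral_add (phi_integrable hb hσ0)
        ((phi_integrable hb hs₂).const_mul _), integral_const_mul]
    rw [h2, phi_scale hb, phi_scale hb] at h1
    -- rpow algebra
    have hrs : ∀ s : ℝ, b ^ (-s) = a ^ (-s) * (r ^ 2 : ℝ) ^ (-s) := fun s => by
      rw [hbdef, Real.mul_rpow ha.le (by positivity)]
    have hr2 : ((r ^ 2 : ℝ)) ^ (-σ) = r ^ (-(2*σ)) := by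
      rw [← Real.rpow_natCast r 2, ← Real.rpow_mul hr.le]
      congr 1
      push_cast
      ring
    have hr3 : r ^ ν * ((r ^ 2 : ℝ)) ^ (-s₂) = ((r ^ 2 : ℝ)) ^ (-σ) := by
      rw [← Real.rpow_natCast r 2, ← Real.rpow_mul hr.le, ← Real.rpow_mul hr.le,
        ← Real.rpow_add hr]
      congr 1
      push_cast [hs2def]
      ring
    calc (∫ u in Ioi (0:ℝ), f u)
        ≤ (C₂ * Kc * V⁻¹) *
          (b ^ (-σ) * (∫ v in Ioi (0:ℝ), Real.exp (-1/v) * v ^ (-1-σ)) +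
           r ^ ν * (b ^ (-s₂) * ∫ v in Ioi (0:ℝ), Real.exp (-1/v) * v ^ (-1-s₂))) := h1
      _ = (C₂ * Kc * ((a : ℝ) ^ (-σ) * (∫ v in Ioi (0:ℝ), Real.exp (-1/v) * v ^ (-1-σ)) +
            a ^ (-s₂) * ∫ v in Ioi (0:ℝ), Real.exp (-1/v) * v ^ (-1-s₂))) *
          (r ^ (-(2*σ)) / V) := by
          rw [hrs σ, hrs s₂, ← hr2]
          linear_combination (C₂ * Kc * V⁻¹ * (a ^ (-s₂)) *
            (∫ v in Ioi (0:ℝ), Real.exp (-1/v) * v ^ (-1-s₂))) * hr3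
      _ = _ := by rw [hs2def, hadef, hKcdef]

set_option maxHeartbeats 1000000 in
/-- comparability of the subordinated kernel at nearby base points:
if `d(y,z) ≤ t` then `C⁻¹ ≤ Q_t^σ(x,y)/Q_t^σ(x,z) ≤ C`. -/
theorem stmt_6
    {M : Type*} [MetricSpace M] [MeasurableSpace M] [BorelSpace M]
    (μ : Measure M)
    (hVpos : ∀ (x : M) (r : ℝ), 0 < r → 0 < μ (ball x r))
    (hVfin : ∀ (x : M) (r : ℝ), 0 < r → μ (ball x r) < ⊤)
    -- volume comparability
    (ν ν' c₀ C₀ : ℝ) (hν' : 0 < ν') (hνν : ν' ≤ ν) (hc₀ : 0 < c₀) (hc₀C₀ : c₀ ≤ C₀)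
    (hdoub : ∀ (x : M) (r R : ℝ), 0 < r → r ≤ R →
        c₀ * (R/r) ^ ν' ≤ (μ (ball x R)).toReal / (μ (ball x r)).toReal ∧
        (μ (ball x R)).toReal / (μ (ball x r)).toReal ≤ C₀ * (R/r) ^ ν)
    (hcomp : ∀ (x y : M) (r : ℝ), 0 < r →
        (μ (ball x r)).toReal ≤ C₀ * (1 + dist x y / r) ^ ν * (μ (ball y r)).toReal)
    -- heat kernel with Li–Yau two-sided Gaussian estimate
    (h : ℝ → M → M → ℝ)
    (hhmeas : Measurable (fun p : ℝ × M × M => h p.1 p.2.1 p.2.2))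
    (hhsym : ∀ u : ℝ, 0 < u → ∀ x y : M, h u x y = h u y x)
    (c₁ C₁ c₂ C₂ : ℝ) (hc₁ : 0 < c₁) (hC₁ : 0 < C₁) (hc₂ : 0 < c₂) (hC₂ : 0 < C₂)
    (hLY : ∀ u : ℝ, 0 < u → ∀ x y : M,
        c₁ / (μ (ball y (Real.sqrt u))).toReal * Real.exp (-C₁ * (dist x y)^2 / u) ≤ h u x y ∧
        h u x y ≤ C₂ / (μ (ball y (Real.sqrt u))).toReal * Real.exp (-c₂ * (dist x y)^2 / u))
    (σ : ℝ) (hσ0 : 0 < σ) (hσ1 : σ < 1) :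
    ∃ C : ℝ, 1 ≤ C ∧ ∀ (t : ℝ), 0 < t → ∀ x y z : M, dist y z ≤ t →
      C⁻¹ ≤ Qker h σ t x y / Qker h σ t x z ∧
      Qker h σ t x y / Qker h σ t x z ≤ C := by
  have hν : 0 < ν := lt_of_lt_of_le hν' hνν
  have hC₀ : 0 < C₀ := lt_of_lt_of_le hc₀ hc₀C₀
  -- derived doubling bounds
  have hub : ∀ (w : M) (r R : ℝ), 0 < r → r ≤ R →
      (μ (ball w R)).toReal ≤ C₀ * (R/r) ^ ν * (μ (ball w r)).toReal := by
    intro w r R hr hrR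
    have h2 := (hdoub w r R hr hrR).2
    have hVr : 0 < (μ (ball w r)).toReal :=
      ENNReal.toReal_pos (hVpos w r hr).ne' (hVfin w r hr).ne
    rw [div_le_iff₀ hVr] at h2
    linarith
  have hlb : ∀ (w : M) (r R : ℝ), 0 < r → r ≤ R →
      c₀ * (μ (ball w r)).toReal ≤ (μ (ball w R)).toReal := by
    intro w r R hr hrR
    have h1 := (hdoub w r R hr hrR).1
    have hVr : 0 < (μ (ball w r)).toReal :=
      ENNReal.toReal_pos (hVpos w r hr).ne' (hVfin w r hr).ne
    have hge1 : (1:ℝ) ≤ (R/r) ^ ν' :=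
      Real.one_le_rpow ((one_le_div hr).2 hrR) hν'.le
    have h2 : c₀ ≤ (μ (ball w R)).toReal / (μ (ball w r)).toReal :=
      le_trans (by nlinarith) h1
    rwa [le_div_iff₀ hVr] at h2
  have hmeas1 : ∀ x y : M, Measurable fun u : ℝ => h u x y := by
    intro x y
    have heq : (fun u : ℝ => h u x y)
        = (fun p : ℝ × M × M => h p.1 p.2.1 p.2.2) ∘ (fun u : ℝ => (u, (x, y))) := rfl
    rw [heq]
    exact hhmeas.comp (measurable_id.prodMk measurable_const)
  -- constants
  set Jσ : ℝ := ∫ v in Ioi (0:ℝ), Real.exp (-1/v) * v ^ (-1-σ) with hJσ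
  set Jν : ℝ := ∫ v in Ioi (0:ℝ), Real.exp (-1/v) * v ^ (-1-(σ+ν/2)) with hJν
  have hJσ0 : 0 ≤ Jσ := setIntegral_nonneg measurableSet_Ioi (fun v hv =>
    mul_nonneg (Real.exp_pos _).le (Real.rpow_nonneg (le_of_lt hv) _))
  have hJν0 : 0 ≤ Jν := setIntegral_nonneg measurableSet_Ioi (fun v hv =>
    mul_nonneg (Real.exp_pos _).le (Real.rpow_nonneg (le_of_lt hv) _))
  set K1 : ℝ := c₁ * Real.exp (-C₁ - 4⁻¹) * (3 * (4:ℝ) ^ (-1-σ)) / (C₀ * 2 ^ ν) with hK1def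
  set K2 : ℝ := C₂ * max C₀ c₀⁻¹ *
      ((min c₂ 4⁻¹ / 2) ^ (-σ) * Jσ + (min c₂ 4⁻¹ / 2) ^ (-(σ+ν/2)) * Jν) with hK2def
  have hK1 : 0 < K1 := by
    rw [hK1def]; positivity
  have hK2 : 0 ≤ K2 := by
    rw [hK2def]
    have hKc : (0:ℝ) < max C₀ c₀⁻¹ := lt_of_lt_of_le hC₀ (le_max_left _ _)
    have ha : (0:ℝ) < min c₂ 4⁻¹ / 2 := by
      have := lt_min hc₂ (by norm_num : (0:ℝ) < 4⁻¹); positivity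
    have h1 : (0:ℝ) ≤ (min c₂ 4⁻¹ / 2) ^ (-σ) * Jσ :=
      mul_nonneg (Real.rpow_nonneg ha.le _) hJσ0
    have h2 : (0:ℝ) ≤ (min c₂ 4⁻¹ / 2) ^ (-(σ+ν/2)) * Jν :=
      mul_nonneg (Real.rpow_nonneg ha.le _) hJν0
    positivity
  set Cfin : ℝ := 4 * (C₀ * 2 ^ ν)^2 * K2 / K1 with hCfin
  have hCfin0 : 0 ≤ Cfin := by rw [hCfin]; positivity
  refine ⟨max 1 Cfin, le_max_left _ _, ?_⟩
  intro t ht x y z hyz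
  -- positivity of the prefactor
  set P : ℝ := t ^ (2*σ) / ((2:ℝ) ^ (2*σ) * Real.Gamma σ) with hPdef
  have hP : 0 < P := by
    rw [hPdef]
    have h1 : (0:ℝ) < t ^ (2*σ) := Real.rpow_pos_of_pos ht _
    have h2 : (0:ℝ) < (2:ℝ) ^ (2*σ) := Real.rpow_pos_of_pos (by norm_num) _
    have h3 : 0 < Real.Gamma σ := Real.Gamma_pos_of_pos hσ0
    positivity
  -- core estimate : one-sided comparison
  have hcore : ∀ y' z' : M, dist y' z' ≤ t →
      Qker h σ t x y' ≤ Cfin * Qker h σ t x z' ∧ 0 < Qker h σ t x z' := by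
    intro y' z' hd
    obtain ⟨fintY, lowY, upY⟩ := main_est μ hVpos hVfin ν c₀ C₀ hν hc₀ hC₀ hub hlb h
      c₁ C₁ c₂ C₂ hc₁ hC₁ hc₂ hC₂ σ hσ0 t ht x y' (hmeas1 x y') (fun u hu => hLY u hu x y')
    obtain ⟨fintZ, lowZ, upZ⟩ := main_est μ hVpos hVfin ν c₀ C₀ hν hc₀ hC₀ hub hlb h
      c₁ C₁ c₂ C₂ hc₁ hC₁ hc₂ hC₂ σ hσ0 t ht x z' (hmeas1 x z') (fun u hu => hLY u hu x z')
    set ry : ℝ := t + dist x y' with hrydef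
    set rz : ℝ := t + dist x z' with hrzdef
    have hry : 0 < ry := by rw [hrydef]; positivity
    have hrz : 0 < rz := by rw [hrzdef]; positivity
    set Vy : ℝ := (μ (ball y' ry)).toReal with hVydef
    set Vz : ℝ := (μ (ball z' rz)).toReal with hVzdef
    have hVy : 0 < Vy := ENNReal.toReal_pos (hVpos y' ry hry).ne' (hVfin y' ry hry).ne
    have hVz : 0 < Vz := ENNReal.toReal_pos (hVpos z' rz hrz).ne' (hVfin z' rz hrz).ne
    have h1 : rz ≤ 2*ry := by
      have := dist_triangle x y' z'
      rw [hrzdef, hrydef]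
      linarith [dist_nonneg (x := x) (y := y')]
    have h2 : ry ≤ 2*rz := by
      have h3 := dist_triangle x z' y'
      have h4 : dist z' y' = dist y' z' := dist_comm _ _
      rw [hrydef, hrzdef]
      linarith [dist_nonneg (x := x) (y := z')]
    have hA : ry ^ (-(2*σ)) ≤ 4 * rz ^ (-(2*σ)) := by
      have hh : rz/2 ≤ ry := by linarith
      calc ry ^ (-(2*σ)) ≤ (rz/2) ^ (-(2*σ)) :=
            Real.rpow_le_rpow_of_nonpos (by positivity) hh (by linarith)
        _ = rz ^ (-(2*σ)) * ((2:ℝ) ^ (-(2*σ)))⁻¹ := by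
            rw [Real.div_rpow hrz.le (by norm_num), div_eq_mul_inv]
        _ = rz ^ (-(2*σ)) * (2:ℝ) ^ (2*σ) := by
            rw [← Real.rpow_neg (by norm_num : (0:ℝ) ≤ 2)]
            norm_num
        _ ≤ rz ^ (-(2*σ)) * 4 := by
            apply mul_le_mul_of_nonneg_left _ (Real.rpow_nonneg hrz.le _)
            calc (2:ℝ) ^ (2*σ) ≤ (2:ℝ) ^ (2:ℝ) :=
                  Real.rpow_le_rpow_of_exponent_le (by norm_num) (by linarith)
              _ = 4 := by
                  rw [show (2:ℝ) = ((2:ℕ):ℝ) by norm_num, Real.rpow_natCast]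
                  norm_num
        _ = 4 * rz ^ (-(2*σ)) := by ring
    have hB : Vz ≤ (C₀ * 2 ^ ν)^2 * Vy := by
      have s1 : Vz ≤ (μ (ball z' (2*ry))).toReal :=
        ENNReal.toReal_mono (hVfin z' (2*ry) (by positivity)).ne
          (measure_mono (ball_subset_ball h1))
      have s2 : (μ (ball z' (2*ry))).toReal ≤ C₀ * 2 ^ ν * (μ (ball z' ry)).toReal := by
        have := hub z' ry (2*ry) hry (by linarith)
        rwa [show (2*ry)/ry = 2 by field_simp] at this
      have s3 : (μ (ball z' ry)).toReal ≤ C₀ * 2 ^ ν * Vy := by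
        have hco := hcomp z' y' ry hry
        have hbase : 1 + dist z' y' / ry ≤ 2 := by
          have h4 : dist z' y' ≤ t := by rw [dist_comm]; exact hd
          have : dist z' y' / ry ≤ 1 := by
            rw [div_le_one hry]
            rw [hrydef]
            linarith [dist_nonneg (x := x) (y := y')]
          linarith
        have hrp : (1 + dist z' y' / ry) ^ ν ≤ (2:ℝ) ^ ν :=
          Real.rpow_le_rpow (by positivity) hbase hν.le
        calc (μ (ball z' ry)).toReal ≤ C₀ * (1 + dist z' y' / ry) ^ ν * Vy := hco
          _ ≤ C₀ * 2 ^ ν * Vy := by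
              apply mul_le_mul_of_nonneg_right _ hVy.le
              exact mul_le_mul_of_nonneg_left hrp hC₀.le
      calc Vz ≤ C₀ * 2 ^ ν * (μ (ball z' ry)).toReal := le_trans s1 s2
        _ ≤ C₀ * 2 ^ ν * (C₀ * 2 ^ ν * Vy) :=
            mul_le_mul_of_nonneg_left s3 (by positivity)
        _ = (C₀ * 2 ^ ν)^2 * Vy := by ring
    have hVyinv : Vy⁻¹ ≤ (C₀ * 2 ^ ν)^2 / Vz := by
      have h' : Vz / (C₀ * 2 ^ ν)^2 ≤ Vy := by
        rw [div_le_iff₀ (by positivity)]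
        linarith
      have := inv_anti₀ (by positivity) h'
      rwa [inv_div] at this
    have hstep : ry ^ (-(2*σ)) / Vy ≤ (4 * rz ^ (-(2*σ))) * ((C₀ * 2 ^ ν)^2 / Vz) := by
      rw [div_eq_mul_inv]
      exact mul_le_mul hA hVyinv (by positivity) (by positivity)
    have hIz : 0 < ∫ u in Ioi (0:ℝ), h u x z' * Real.exp (-(t^2)/(4*u)) * u ^ (-1-σ) :=
      lt_of_lt_of_le (by positivity) lowZ
    have hQz : 0 < Qker h σ t x z' := by
      have : Qker h σ t x z'
          = P * ∫ u in Set.Ioi (0:ℝ), h u x z' * Real.exp (-(t^2)/(4*u)) * u ^ (-1-σ) := rfl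
      rw [this]
      exact mul_pos hP hIz
    refine ⟨?_, hQz⟩
    have key : (∫ u in Ioi (0:ℝ), h u x y' * Real.exp (-(t^2)/(4*u)) * u ^ (-1-σ))
        ≤ Cfin * ∫ u in Ioi (0:ℝ), h u x z' * Real.exp (-(t^2)/(4*u)) * u ^ (-1-σ) := by
      calc (∫ u in Ioi (0:ℝ), h u x y' * Real.exp (-(t^2)/(4*u)) * u ^ (-1-σ))
          ≤ K2 * (ry ^ (-(2*σ)) / Vy) := upY
        _ ≤ K2 * ((4 * rz ^ (-(2*σ))) * ((C₀ * 2 ^ ν)^2 / Vz)) :=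
            mul_le_mul_of_nonneg_left hstep hK2
        _ = Cfin * (K1 * (rz ^ (-(2*σ)) / Vz)) := by
            rw [hCfin]
            field_simp
        _ ≤ Cfin * ∫ u in Ioi (0:ℝ), h u x z' * Real.exp (-(t^2)/(4*u)) * u ^ (-1-σ) :=
            mul_le_mul_of_nonneg_left lowZ hCfin0
    have hQy : Qker h σ t x y'
        = P * ∫ u in Set.Ioi (0:ℝ), h u x y' * Real.exp (-(t^2)/(4*u)) * u ^ (-1-σ) := rfl
    have hQz' : Qker h σ t x z'
        = P * ∫ u in Set.Ioi (0:ℝ), h u x z' * Real.exp (-(t^2)/(4*u)) * u ^ (-1-σ) := rfl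
    rw [hQy, hQz']
    calc P * ∫ u in Set.Ioi (0:ℝ), h u x y' * Real.exp (-(t^2)/(4*u)) * u ^ (-1-σ)
        ≤ P * (Cfin * ∫ u in Set.Ioi (0:ℝ), h u x z' * Real.exp (-(t^2)/(4*u)) * u ^ (-1-σ)) :=
          mul_le_mul_of_nonneg_left key hP.le
      _ = Cfin * (P * ∫ u in Set.Ioi (0:ℝ), h u x z' * Real.exp (-(t^2)/(4*u)) * u ^ (-1-σ)) := by
          ring
  obtain ⟨hyz', hQz⟩ := hcore y z hyz
  obtain ⟨hzy', hQy⟩ := hcore z y (by rwa [dist_comm])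
  set C : ℝ := max 1 Cfin
  have hC1 : (1:ℝ) ≤ C := le_max_left _ _
  have hC : (0:ℝ) < C := lt_of_lt_of_le one_pos hC1
  have hCfinC : Cfin ≤ C := le_max_right _ _
  constructor
  · rw [le_div_iff₀ hQz]
    have hz2 : Qker h σ t x z ≤ C * Qker h σ t x y :=
      le_trans hzy' (mul_le_mul_of_nonneg_right hCfinC hQy.le)
    have := mul_le_mul_of_nonneg_left hz2 (inv_nonneg.2 hC.le)
    rwa [← mul_assoc, inv_mul_cancel₀ hC.ne', one_mul] at this
  · rw [div_le_iff₀ hQz]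
    calc Qker h σ t x y ≤ Cfin * Qker h σ t x z := hyz'
      _ ≤ C * Qker h σ t x z := mul_le_mul_of_nonneg_right hCfinC hQz.le
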